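/- Let ι be a finitely generated abelian group, A a noetherian commutative ring graded by ι, and Q a G-primary homogeneous ideal of A. Then the A-module A⧸Q has no embedded primes: every associated prime of A⧸Q is a minimal prime over Q. -/

import Mathlib

/-- A homogeneous ideal `Q` of a graded ring `A` is `G`-primary if `Q ≠ A` and for all
homogeneous ideals `I`, `J` with `I·J ⊆ Q` and `J ⊄ Q`, one has `I ⊆ (√Q)*`. -/
def Ideal.IsGPrimary {ι : Type*} [AddCommGroup ι] [DecidableEq ι] {A : Type*} [CommRing A]
    (𝒜 : ι → AddSubgroup A) [GradedRing 𝒜] (Q : Ideal A) : Prop :=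
  Q ≠ ⊤ ∧ ∀ I J : Ideal A, I.IsHomogeneous 𝒜 → J.IsHomogeneous 𝒜 →
    I * J ≤ Q → ¬ J ≤ Q → I ≤ (Q.radical.homogeneousCore 𝒜).toIdeal

set_option linter.unusedSectionVars false


open DirectSum

section CoarseGrading

variable {ι : Type*} [AddCommGroup ι] [DecidableEq ι] {A : Type*} [CommRing A]
  (𝒜 : ι → AddSubgroup A) [GradedRing 𝒜]

lemma decompose_coe_sum {β : Type*} (s : Finset β) (f : β → A) (k : ι) :
    (DirectSum.decompose 𝒜 (∑ b ∈ s, f b) k : A) =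
      ∑ b ∈ s, (DirectSum.decompose 𝒜 (f b) k : A) := by
  have h : ∀ z : A, (DirectSum.decompose 𝒜 z k : A) =
      ((𝒜 k).subtype.comp ((DFinsupp.evalAddMonoidHom k).comp
        (DirectSum.decomposeAddEquiv 𝒜).toAddMonoidHom)) z := fun _ => rfl
  simp only [h]
  rw [map_sum]

lemma decompose_coe_sub (a b : A) (k : ι) :
    (DirectSum.decompose 𝒜 (a - b) k : A) =
      (DirectSum.decompose 𝒜 a k : A) - (DirectSum.decompose 𝒜 b k : A) := by
  have h : ∀ z : A, (DirectSum.decompose 𝒜 z k : A) =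
      ((𝒜 k).subtype.comp ((DFinsupp.evalAddMonoidHom k).comp
        (DirectSum.decomposeAddEquiv 𝒜).toAddMonoidHom)) z := fun _ => rfl
  simp only [h]
  rw [map_sub]

variable {Λ : Type*} [AddCommGroup Λ] [DecidableEq Λ] (g : ι →+ Λ)

/-- The coarsening of the grading `𝒜` along a group homomorphism `g`. -/
def coarseGrading (c : Λ) : AddSubgroup A where
  carrier := {x | ∀ i : ι, g i ≠ c → (DirectSum.decompose 𝒜 x i : A) = 0}
  zero_mem' := fun i _ => by
    rw [DirectSum.decompose_zero]; rfl
  add_mem' := fun {a b} ha hb i hi => by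
    rw [DirectSum.decompose_add, DirectSum.add_apply, AddSubgroup.coe_add, ha i hi, hb i hi,
      add_zero]
  neg_mem' := fun {a} ha i hi => by
    have h1 : DirectSum.decompose 𝒜 (-a) = -DirectSum.decompose 𝒜 a :=
      map_neg (DirectSum.decomposeAddEquiv 𝒜) a
    rw [h1, DFinsupp.neg_apply, NegMemClass.coe_neg, ha i hi, neg_zero]

lemma mem_coarseGrading_iff {x : A} {c : Λ} :
    x ∈ coarseGrading 𝒜 g c ↔ ∀ i : ι, g i ≠ c → (DirectSum.decompose 𝒜 x i : A) = 0 :=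
  Iff.rfl

lemma mem_coarseGrading_of_mem {i : ι} {x : A} (hx : x ∈ 𝒜 i) :
    x ∈ coarseGrading 𝒜 g (g i) := by
  intro k hk
  exact DirectSum.decompose_of_mem_ne 𝒜 hx (fun h => hk (by rw [← h]))

def coarseGradedMonoid : SetLike.GradedMonoid (coarseGrading 𝒜 g) where
  one_mem := by
    have := mem_coarseGrading_of_mem 𝒜 g (SetLike.one_mem_graded 𝒜)
    rwa [map_zero] at this
  mul_mem := by
    classical
    intro c d x y hx hy k hk
    have hxy : x * y = ∑ i ∈ (DirectSum.decompose 𝒜 x).support,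
        ∑ j ∈ (DirectSum.decompose 𝒜 y).support,
          (DirectSum.decompose 𝒜 x i : A) * (DirectSum.decompose 𝒜 y j : A) := by
      rw [← Finset.sum_mul_sum, DirectSum.sum_support_decompose 𝒜 x,
        DirectSum.sum_support_decompose 𝒜 y]
    rw [hxy, decompose_coe_sum]
    refine Finset.sum_eq_zero fun i hi => ?_
    rw [decompose_coe_sum]
    refine Finset.sum_eq_zero fun j hj => ?_
    refine DirectSum.decompose_of_mem_ne 𝒜
      (SetLike.mul_mem_graded (SetLike.coe_mem _) (SetLike.coe_mem _)) ?_
    intro h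
    apply hk
    rw [← h, map_add]
    have hgi : g i = c := by
      by_contra hgi
      exact DFinsupp.mem_support_iff.mp hi (Subtype.ext (hx i hgi))
    have hgj : g j = d := by
      by_contra hgj
      exact DFinsupp.mem_support_iff.mp hj (Subtype.ext (hy j hgj))
    rw [hgi, hgj]

/-- auxiliary map for the coarse decomposition -/
def coarseDecomposeAux : (⨁ i, 𝒜 i) →+ ⨁ c, coarseGrading 𝒜 g c :=
  DirectSum.toAddMonoid fun i =>
    (DirectSum.of (fun c => coarseGrading 𝒜 g c) (g i)).comp
      (AddSubgroup.inclusion (fun _ hx => mem_coarseGrading_of_mem 𝒜 g hx))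

lemma coe_coarseDecomposeAux (u : ⨁ i, 𝒜 i) :
    DirectSum.coeAddMonoidHom (coarseGrading 𝒜 g) (coarseDecomposeAux 𝒜 g u) =
      DirectSum.coeAddMonoidHom 𝒜 u := by
  have h : (DirectSum.coeAddMonoidHom (coarseGrading 𝒜 g)).comp (coarseDecomposeAux 𝒜 g) =
      DirectSum.coeAddMonoidHom 𝒜 := by
    refine DirectSum.addHom_ext fun i x => ?_
    simp only [AddMonoidHom.comp_apply, coarseDecomposeAux, DirectSum.toAddMonoid_of,
      DirectSum.coeAddMonoidHom_of]
    rfl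
  exact DFunLike.congr_fun h u

lemma of_coarse_eq {c c' : Λ} (h : c = c') {y : A} (h1 : y ∈ coarseGrading 𝒜 g c)
    (h2 : y ∈ coarseGrading 𝒜 g c') :
    DirectSum.of (fun c => coarseGrading 𝒜 g c) c ⟨y, h1⟩ =
      DirectSum.of (fun c => coarseGrading 𝒜 g c) c' ⟨y, h2⟩ := by
  subst h; rfl

lemma coarseDecomposeAux_of_mem {c : Λ} {y : A} (hy : y ∈ coarseGrading 𝒜 g c) :
    coarseDecomposeAux 𝒜 g (DirectSum.decompose 𝒜 y) =
      DirectSum.of (fun c => coarseGrading 𝒜 g c) c ⟨y, hy⟩ := by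
  classical
  have hmem : ∀ i : ι, (DirectSum.decompose 𝒜 y i : A) ∈ coarseGrading 𝒜 g c := by
    intro i
    by_cases h0 : (DirectSum.decompose 𝒜 y i : A) = 0
    · rw [h0]; exact zero_mem _
    · have hgi : g i = c := by
        by_contra hgi
        exact h0 (hy i hgi)
      exact hgi ▸ mem_coarseGrading_of_mem 𝒜 g (SetLike.coe_mem _)
  conv_lhs => rw [← DirectSum.sum_support_of (DirectSum.decompose 𝒜 y)]
  rw [map_sum]
  have h1 : ∀ i ∈ (DirectSum.decompose 𝒜 y).support,
      coarseDecomposeAux 𝒜 g (DirectSum.of _ i (DirectSum.decompose 𝒜 y i)) =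
        DirectSum.of (fun c => coarseGrading 𝒜 g c) c
          ⟨(DirectSum.decompose 𝒜 y i : A), hmem i⟩ := by
    intro i hi
    have hgi : g i = c := by
      by_contra hgi
      exact DFinsupp.mem_support_iff.mp hi (Subtype.ext (hy i hgi))
    rw [coarseDecomposeAux, DirectSum.toAddMonoid_of]
    exact of_coarse_eq 𝒜 g hgi _ _
  rw [Finset.sum_congr rfl h1, ← map_sum]
  congr 1
  apply Subtype.ext
  push_cast
  exact DirectSum.sum_support_decompose 𝒜 y

/-- The coarse grading is itself a graded ring structure. -/
def coarseGradedRing : GradedRing (coarseGrading 𝒜 g) where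
  __ := coarseGradedMonoid 𝒜 g
  decompose' := fun x => coarseDecomposeAux 𝒜 g (DirectSum.decompose 𝒜 x)
  left_inv := fun x => by
    rw [coe_coarseDecomposeAux]
    exact (DirectSum.decompose 𝒜).symm_apply_apply x
  right_inv := fun b => by
    have h : ((coarseDecomposeAux 𝒜 g).comp
        ((DirectSum.decomposeAddEquiv 𝒜).toAddMonoidHom.comp
          (DirectSum.coeAddMonoidHom (coarseGrading 𝒜 g)))) =
        AddMonoidHom.id _ := by
      refine DirectSum.addHom_ext fun c y => ?_
      simp only [AddMonoidHom.comp_apply, DirectSum.coeAddMonoidHom_of,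
        AddMonoidHom.id_apply, AddEquiv.coe_toAddMonoidHom,
        DirectSum.decomposeAddEquiv_apply]
      rw [coarseDecomposeAux_of_mem 𝒜 g y.2]
    exact DFunLike.congr_fun h b

variable [∀ (i : ι) (x : 𝒜 i), Decidable (x ≠ 0)]

lemma coarse_decompose_eq (x : A) (c : Λ) :
    letI := coarseGradedRing 𝒜 g
    (DirectSum.decompose (coarseGrading 𝒜 g) x c : A)
      = ∑ i ∈ (DirectSum.decompose 𝒜 x).support.filter fun i => g i = c,
          (DirectSum.decompose 𝒜 x i : A) := by
  letI := coarseGradedRing 𝒜 g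
  have h0 : DirectSum.decompose (coarseGrading 𝒜 g) x =
      coarseDecomposeAux 𝒜 g (DirectSum.decompose 𝒜 x) := rfl
  rw [h0]
  conv_lhs => rw [← DirectSum.sum_support_of (DirectSum.decompose 𝒜 x), map_sum]
  rw [Finset.sum_filter]
  rw [show ∀ (u : ⨁ c', coarseGrading 𝒜 g c'), (u c : A) =
      ((coarseGrading 𝒜 g c).subtype.comp (DFinsupp.evalAddMonoidHom c)) u from fun _ => rfl]
  rw [map_sum]
  refine Finset.sum_congr rfl fun i hi => ?_
  simp only [AddMonoidHom.comp_apply, coarseDecomposeAux, DirectSum.toAddMonoid_of]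
  by_cases hgi : g i = c
  · rw [if_pos hgi]
    subst hgi
    show (((DirectSum.of (fun c => coarseGrading 𝒜 g c) (g i))
          ((AddSubgroup.inclusion (fun _ hx => mem_coarseGrading_of_mem 𝒜 g hx))
            (DirectSum.decompose 𝒜 x i))) (g i) : A) = _
    rw [DirectSum.of_eq_same]
    rfl
  · rw [if_neg hgi]
    show (((DirectSum.of (fun c => coarseGrading 𝒜 g c) (g i))
          ((AddSubgroup.inclusion (fun _ hx => mem_coarseGrading_of_mem 𝒜 g hx))
            (DirectSum.decompose 𝒜 x i))) c : A) = 0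
    rw [DirectSum.of_eq_of_ne _ _ _ (Ne.symm hgi)]
    rfl

lemma Ideal.IsHomogeneous.coarse {Q : Ideal A} (hQ : Q.IsHomogeneous 𝒜) :
    letI := coarseGradedRing 𝒜 g
    Q.IsHomogeneous (coarseGrading 𝒜 g) := by
  letI := coarseGradedRing 𝒜 g
  intro c r hr
  rw [coarse_decompose_eq]
  exact Ideal.sum_mem _ fun i _ => hQ i hr

end CoarseGrading

section OrderedGrading

open DirectSum

variable {Λ : Type*} [AddCommGroup Λ] [DecidableEq Λ] [LinearOrder Λ]
  [CovariantClass Λ Λ (· + ·) (· < ·)] [CovariantClass Λ Λ (· + ·) (· ≤ ·)]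
  [CovariantClass Λ Λ (Function.swap (· + ·)) (· ≤ ·)]
  {A : Type*} [CommRing A] (ℬ : Λ → AddSubgroup A) [GradedRing ℬ]

/-- If all pairs of support degrees avoid `k`, the `k`-component of a product vanishes. -/
lemma proj_mul_eq_zero [∀ (c : Λ) (x : ℬ c), Decidable (x ≠ 0)]
    (u v : A) (k : Λ)
    (h : ∀ i ∈ (DirectSum.decompose ℬ u).support, ∀ j ∈ (DirectSum.decompose ℬ v).support,
      i + j ≠ k) :
    (DirectSum.decompose ℬ (u * v) k : A) = 0 := by
  have huv : u * v = ∑ i ∈ (DirectSum.decompose ℬ u).support,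
      ∑ j ∈ (DirectSum.decompose ℬ v).support,
        (DirectSum.decompose ℬ u i : A) * (DirectSum.decompose ℬ v j : A) := by
    rw [← Finset.sum_mul_sum, DirectSum.sum_support_decompose ℬ u,
      DirectSum.sum_support_decompose ℬ v]
  rw [huv, decompose_coe_sum]
  refine Finset.sum_eq_zero fun i hi => ?_
  rw [decompose_coe_sum]
  refine Finset.sum_eq_zero fun j hj => ?_
  exact DirectSum.decompose_of_mem_ne ℬ
    (SetLike.mul_mem_graded (SetLike.coe_mem _) (SetLike.coe_mem _)) (h i hi j hj)

lemma top_component_mul_mem [∀ (c : Λ) (x : ℬ c), Decidable (x ≠ 0)] {Q : Ideal A} (hQ : Q.IsHomogeneous ℬ)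
    {a : A} {c : Λ} (hc : ∀ e ∈ (DirectSum.decompose ℬ a).support, e ≤ c)
    {y : A} (hay : a * y ∈ Q) {d : Λ}
    (hd : ∀ e ∈ (DirectSum.decompose ℬ y).support, d < e → (DirectSum.decompose ℬ y e : A) ∈ Q) :
    (DirectSum.decompose ℬ a c : A) * (DirectSum.decompose ℬ y d : A) ∈ Q := by
  classical
  set w : A := (DirectSum.decompose ℬ a c : A) with hw
  set a' : A := a - w with ha'
  set yQ : A := ∑ e ∈ (DirectSum.decompose ℬ y).support.filter fun e => d < e,
    (DirectSum.decompose ℬ y e : A) with hyQ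
  set ylo : A := y - yQ with hylo
  have f1 : yQ ∈ Q := Ideal.sum_mem _ fun e he =>
    hd e (Finset.mem_filter.mp he).1 (Finset.mem_filter.mp he).2
  have f2 : ∀ e, e ≠ c → (DirectSum.decompose ℬ a' e : A) = (DirectSum.decompose ℬ a e : A) := by
    intro e he
    rw [ha', decompose_coe_sub, DirectSum.decompose_of_mem_ne ℬ (SetLike.coe_mem _)
      (fun h => he h.symm), sub_zero]
  have f2' : (DirectSum.decompose ℬ a' c : A) = 0 := by
    rw [ha', decompose_coe_sub, DirectSum.decompose_of_mem_same ℬ (SetLike.coe_mem _), ← hw,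
      sub_self]
  have f3 : ∀ e ∈ (DirectSum.decompose ℬ a').support, e < c := by
    intro e he
    have hne : (DirectSum.decompose ℬ a' e : A) ≠ 0 := by
      intro h0
      exact DFinsupp.mem_support_iff.mp he (Subtype.ext h0)
    have hec : e ≠ c := fun h => hne (h ▸ f2')
    have : e ∈ (DirectSum.decompose ℬ a).support := by
      rw [DFinsupp.mem_support_iff]
      intro h0
      apply hne
      rw [f2 e hec, h0]
      rfl
    exact lt_of_le_of_ne (hc e this) hec
  have f4comp : ∀ e, (DirectSum.decompose ℬ yQ e : A) =
      if e ∈ (DirectSum.decompose ℬ y).support.filter (fun e => d < e)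
      then (DirectSum.decompose ℬ y e : A) else 0 := by
    intro e
    rw [hyQ, decompose_coe_sum]
    have h5 : ∀ e' ∈ (DirectSum.decompose ℬ y).support.filter (fun e => d < e),
        (DirectSum.decompose ℬ ((DirectSum.decompose ℬ y e' : A)) e : A) =
          if e' = e then (DirectSum.decompose ℬ y e : A) else 0 := by
      intro e' _
      by_cases h : e' = e
      · subst h
        rw [if_pos rfl, DirectSum.decompose_of_mem_same ℬ (SetLike.coe_mem _)]
      · rw [if_neg h, DirectSum.decompose_of_mem_ne ℬ (SetLike.coe_mem _) h]
    rw [Finset.sum_congr rfl h5, Finset.sum_ite_eq' _ e (fun _ => (DirectSum.decompose ℬ y e : A))]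
  have f4 : ∀ e ∈ (DirectSum.decompose ℬ ylo).support, e ≤ d := by
    intro e he
    by_contra hlt
    push_neg at hlt
    have hne : (DirectSum.decompose ℬ ylo e : A) ≠ 0 := by
      intro h0
      exact DFinsupp.mem_support_iff.mp he (Subtype.ext h0)
    apply hne
    rw [hylo, decompose_coe_sub, f4comp e]
    by_cases hy : e ∈ (DirectSum.decompose ℬ y).support
    · rw [if_pos (Finset.mem_filter.mpr ⟨hy, hlt⟩), sub_self]
    · rw [if_neg (fun hmem => hy (Finset.mem_filter.mp hmem).1), sub_zero]
      rw [DFinsupp.notMem_support_iff.mp hy]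
      rfl
  have f5 : (DirectSum.decompose ℬ (a' * ylo) (c + d) : A) = 0 := by
    refine proj_mul_eq_zero ℬ _ _ _ fun i hi j hj => ?_
    exact ne_of_lt (add_lt_add_of_lt_of_le (f3 i hi) (f4 j hj))
  have f6 : (DirectSum.decompose ℬ (a' * yQ) (c + d) : A) ∈ Q :=
    hQ _ (Ideal.mul_mem_left _ _ f1)
  have f7 : (DirectSum.decompose ℬ (a * y) (c + d) : A) ∈ Q := hQ _ hay
  have f8 : (DirectSum.decompose ℬ (w * y) (c + d) : A) =
      w * (DirectSum.decompose ℬ y d : A) :=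
    DirectSum.coe_decompose_mul_add_of_left_mem ℬ (SetLike.coe_mem _)
  have key : w * y = a * y - a' * yQ - a' * ylo := by
    rw [ha', hylo]; ring
  rw [← f8, key, decompose_coe_sub, decompose_coe_sub, f5, sub_zero]
  exact Ideal.sub_mem _ f7 f6


lemma mem_of_components_mem [∀ (c : Λ) (x : ℬ c), Decidable (x ≠ 0)]
    {Q : Ideal A} {y : A}
    (h : ∀ e ∈ (DirectSum.decompose ℬ y).support, (DirectSum.decompose ℬ y e : A) ∈ Q) :
    y ∈ Q := by
  rw [← DirectSum.sum_support_decompose ℬ y]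
  exact Ideal.sum_mem _ h

open scoped Classical in
lemma exists_pow_top_mul_mem [∀ (c : Λ) (x : ℬ c), Decidable (x ≠ 0)]
    {Q : Ideal A} (hQ : Q.IsHomogeneous ℬ)
    {a : A} {c : Λ} (hc : ∀ e ∈ (DirectSum.decompose ℬ a).support, e ≤ c) :
    ∀ (k : ℕ) (y : A),
      ((DirectSum.decompose ℬ y).support.filter
        fun e => (DirectSum.decompose ℬ y e : A) ∉ Q).card ≤ k →
      a * y ∈ Q → ∃ m : ℕ, (DirectSum.decompose ℬ a c : A) ^ m * y ∈ Q := by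
  classical
  intro k
  induction k with
  | zero =>
    intro y hcard hay
    refine ⟨0, ?_⟩
    rw [pow_zero, one_mul]
    refine mem_of_components_mem ℬ fun e he => ?_
    by_contra hne
    have : e ∈ (DirectSum.decompose ℬ y).support.filter
        fun e => (DirectSum.decompose ℬ y e : A) ∉ Q := Finset.mem_filter.mpr ⟨he, hne⟩
    rw [Finset.card_eq_zero.mp (Nat.le_zero.mp hcard)] at this
    exact absurd this (Finset.notMem_empty e)
  | succ k ih =>
    intro y hcard hay
    set w : A := (DirectSum.decompose ℬ a c : A) with hw
    set N := (DirectSum.decompose ℬ y).support.filter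
      (fun e => (DirectSum.decompose ℬ y e : A) ∉ Q) with hN
    rcases N.eq_empty_or_nonempty with hNe | hNe
    · refine ⟨0, ?_⟩
      rw [pow_zero, one_mul]
      refine mem_of_components_mem ℬ fun e he => ?_
      by_contra hne
      have : e ∈ N := Finset.mem_filter.mpr ⟨he, hne⟩
      rw [hNe] at this
      exact absurd this (Finset.notMem_empty e)
    · set d := N.max' hNe with hdmx
      have hdN : d ∈ N := N.max'_mem hNe
      have hd : ∀ e ∈ (DirectSum.decompose ℬ y).support, d < e →
          (DirectSum.decompose ℬ y e : A) ∈ Q := by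
        intro e he hlt
        by_contra hne
        exact absurd (Finset.le_max' N e (Finset.mem_filter.mpr ⟨he, hne⟩)) (not_le.mpr hlt)
      have hwd : w * (DirectSum.decompose ℬ y d : A) ∈ Q :=
        top_component_mul_mem ℬ hQ hc hay hd
      have hay' : a * (w * y) ∈ Q := by
        rw [mul_left_comm]
        exact Ideal.mul_mem_left _ _ hay
      have hcomp' : ∀ e, (DirectSum.decompose ℬ (w * y) e : A) =
          w * (DirectSum.decompose ℬ y (-c + e) : A) := by
        intro e
        have := DirectSum.coe_decompose_mul_add_of_left_mem (𝒜 := ℬ)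
          (b := y) (j := -c + e) (SetLike.coe_mem (DirectSum.decompose ℬ a c))
        rwa [add_neg_cancel_left] at this
      have hsub : ((DirectSum.decompose ℬ (w * y)).support.filter
          fun e => (DirectSum.decompose ℬ (w * y) e : A) ∉ Q) ⊆
            (N.erase d).image (fun e => c + e) := by
        intro e he
        obtain ⟨hesupp, heQ⟩ := Finset.mem_filter.mp he
        have h1 : w * (DirectSum.decompose ℬ y (-c + e) : A) ∉ Q := by
          rw [← hcomp']; exact heQ
        have h2 : (DirectSum.decompose ℬ y (-c + e) : A) ∉ Q :=
          fun h => h1 (Ideal.mul_mem_left _ _ h)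
        have h3 : (-c + e) ∈ N := by
          refine Finset.mem_filter.mpr ⟨?_, h2⟩
          rw [DFinsupp.mem_support_iff]
          intro h0
          apply h2
          rw [h0]
          exact Q.zero_mem
        have h4 : (-c + e) ≠ d := by
          intro h
          apply h1
          rw [h]
          exact hwd
        refine Finset.mem_image.mpr ⟨-c + e, Finset.mem_erase.mpr ⟨h4, h3⟩, by
          rw [add_neg_cancel_left]⟩
      have hcard' : ((DirectSum.decompose ℬ (w * y)).support.filter
          fun e => (DirectSum.decompose ℬ (w * y) e : A) ∉ Q).card ≤ k := by
        calc _ ≤ ((N.erase d).image (fun e => c + e)).card := Finset.card_le_card hsub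
        _ ≤ (N.erase d).card := Finset.card_image_le
        _ = N.card - 1 := Finset.card_erase_of_mem hdN
        _ ≤ k := by omega
      obtain ⟨m, hm⟩ := ih (w * y) hcard' hay'
      exact ⟨m + 1, by rw [pow_succ, mul_assoc]; exact hm⟩

open scoped Classical in
/-- The annihilator-style prime `P = (Q : x)` of a homogeneous ideal `Q` is homogeneous. -/
theorem isHomogeneous_of_isPrime_colon {Q P : Ideal A} (hQ : Q.IsHomogeneous ℬ)
    (hP : P.IsPrime) {x : A} (hPx : ∀ a, a ∈ P ↔ a * x ∈ Q) :
    P.IsHomogeneous ℬ := by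
  classical
  suffices H : ∀ (n : ℕ) (a : A), (DirectSum.decompose ℬ a).support.card ≤ n → a ∈ P →
      ∀ c, (DirectSum.decompose ℬ a c : A) ∈ P by
    intro c a ha
    exact H _ a le_rfl ha c
  intro n
  induction n with
  | zero =>
    intro a hcard _ c
    have h0 : (DirectSum.decompose ℬ a).support = ∅ := Finset.card_eq_zero.mp
      (Nat.le_zero.mp hcard)
    have : DirectSum.decompose ℬ a = 0 := DFinsupp.support_eq_empty.mp h0
    rw [this]
    exact P.zero_mem
  | succ n ih =>
    intro a hcard ha c
    rcases (DirectSum.decompose ℬ a).support.eq_empty_or_nonempty with hs | hs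
    · have : DirectSum.decompose ℬ a = 0 := DFinsupp.support_eq_empty.mp hs
      rw [this]
      exact P.zero_mem
    · set ctop := (DirectSum.decompose ℬ a).support.max' hs with hctop
      have hc : ∀ e ∈ (DirectSum.decompose ℬ a).support, e ≤ ctop :=
        fun e he => Finset.le_max' _ e he
      obtain ⟨m, hm⟩ := exists_pow_top_mul_mem ℬ hQ hc _ x le_rfl ((hPx a).mp ha)
      have hw : (DirectSum.decompose ℬ a ctop : A) ∈ P :=
        hP.mem_of_pow_mem m ((hPx _).mpr hm)
      set a' : A := a - (DirectSum.decompose ℬ a ctop : A) with ha'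
      have ha'P : a' ∈ P := P.sub_mem ha hw
      have f2 : ∀ e, e ≠ ctop →
          (DirectSum.decompose ℬ a' e : A) = (DirectSum.decompose ℬ a e : A) := by
        intro e he
        rw [ha', decompose_coe_sub, DirectSum.decompose_of_mem_ne ℬ (SetLike.coe_mem _)
          (fun h => he h.symm), sub_zero]
      have f2' : (DirectSum.decompose ℬ a' ctop : A) = 0 := by
        rw [ha', decompose_coe_sub, DirectSum.decompose_of_mem_same ℬ (SetLike.coe_mem _),
          sub_self]
      have hsupp' : (DirectSum.decompose ℬ a').support ⊆
          (DirectSum.decompose ℬ a).support.erase ctop := by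
        intro e he
        have hne : (DirectSum.decompose ℬ a' e : A) ≠ 0 := by
          intro h0
          exact DFinsupp.mem_support_iff.mp he (Subtype.ext h0)
        have hec : e ≠ ctop := fun h => hne (h ▸ f2')
        refine Finset.mem_erase.mpr ⟨hec, ?_⟩
        rw [DFinsupp.mem_support_iff]
        intro h0
        apply hne
        rw [f2 e hec, h0]
        rfl
      have hcard' : (DirectSum.decompose ℬ a').support.card ≤ n := by
        calc _ ≤ ((DirectSum.decompose ℬ a).support.erase ctop).card :=
              Finset.card_le_card hsupp'
        _ = (DirectSum.decompose ℬ a).support.card - 1 :=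
              Finset.card_erase_of_mem (Finset.max'_mem _ hs)
        _ ≤ n := by omega
      by_cases hcc : c = ctop
      · rw [hcc]
        exact hw
      · rw [← f2 c hcc]
        exact ih a' hcard' ha'P c

end OrderedGrading


set_option maxHeartbeats 3000000 in
/-- Let `ι` be a finitely generated abelian group, `A` a noetherian commutative ring graded by
`ι`, and `Q` a `G`-primary homogeneous ideal of `A`.  Then `A ⧸ Q` has no embedded primes:
every associated prime of `A ⧸ Q` is a minimal prime over `Q`. -/
theorem Ideal.IsGPrimary.no_embedded_primes {ι : Type*} [AddCommGroup ι] [AddGroup.FG ι]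
    [DecidableEq ι] {A : Type*} [CommRing A] [IsNoetherianRing A]
    (𝒜 : ι → AddSubgroup A) [GradedRing 𝒜] (Q : Ideal A) (hQhom : Q.IsHomogeneous 𝒜)
    (hQ : Q.IsGPrimary 𝒜) :
    ∀ 𝔭 ∈ associatedPrimes A (A ⧸ Q), 𝔭 ∈ Q.minimalPrimes := by
  classical
  intro 𝔭 h𝔭
  obtain ⟨hp, xbar, hann⟩ := isAssociatedPrime_iff.mp h𝔭
  obtain ⟨x, rfl⟩ := Ideal.Quotient.mk_surjective xbar
  have hPx : ∀ a, a ∈ 𝔭 ↔ a * x ∈ Q := by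
    intro a
    rw [hann, Submodule.mem_colon_singleton, Submodule.mem_bot]
    rw [show a • (Ideal.Quotient.mk Q x) = Ideal.Quotient.mk Q (a * x) from rfl]
    exact Ideal.Quotient.eq_zero_iff_mem
  have hQ𝔭 : Q ≤ 𝔭 := fun q hq => (hPx q).mpr (Q.mul_mem_right x hq)
  have hxQ : x ∉ Q := fun h =>
    hp.ne_top ((Ideal.eq_top_iff_one 𝔭).mpr ((hPx 1).mpr (by rwa [one_mul])))
  obtain ⟨𝔮, h𝔮min, h𝔮𝔭⟩ := Ideal.exists_minimalPrimes_le hQ𝔭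
  have h𝔮prime : 𝔮.IsPrime := h𝔮min.1.1
  have hQ𝔮 : Q ≤ 𝔮 := h𝔮min.1.2
  suffices hle : 𝔭 ≤ 𝔮 by
    have : 𝔭 = 𝔮 := le_antisymm hle h𝔮𝔭
    rw [this]; exact h𝔮min
  -- Every homogeneous element of `𝔭` lies in `𝔮`, by `G`-primariness.
  have hom𝔭𝔮 : ∀ a : A, SetLike.IsHomogeneousElem 𝒜 a → a ∈ 𝔭 → a ∈ 𝔮 := by
    rintro a ⟨i, hai⟩ hap
    set J : Ideal A := Q ⊔ Ideal.span (Set.range fun j => (DirectSum.decompose 𝒜 x j : A))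
      with hJ
    have hJhom : J.IsHomogeneous 𝒜 := Ideal.IsHomogeneous.sup hQhom
      (Ideal.homogeneous_span 𝒜 _ (by rintro y ⟨j, rfl⟩; exact ⟨j, SetLike.coe_mem _⟩))
    have hIhom : (Ideal.span {a}).IsHomogeneous 𝒜 := Ideal.homogeneous_span 𝒜 _
      (by rintro y hy; rw [Set.mem_singleton_iff] at hy; subst hy; exact ⟨i, hai⟩)
    have hax : a * x ∈ Q := (hPx a).mp hap
    have hIJ : Ideal.span {a} * J ≤ Q := by
      rw [Ideal.span_singleton_mul_le_iff]
      intro z hz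
      have hcolon : J ≤ Q.colon (Ideal.span {a}) := by
        rw [hJ]
        refine sup_le (fun q hq => Ideal.mem_colon_span_singleton.mpr (Q.mul_mem_right a hq)) ?_
        rw [Ideal.span_le]
        rintro y ⟨j, rfl⟩
        refine Ideal.mem_colon_span_singleton.mpr ?_
        rw [mul_comm, ← DirectSum.coe_decompose_mul_add_of_left_mem 𝒜 hai]
        exact hQhom _ hax
      have := hcolon hz
      rw [Ideal.mem_colon_span_singleton] at this
      rwa [mul_comm]
    have hJQ : ¬ J ≤ Q := by
      intro hle'
      apply hxQ
      rw [← DirectSum.sum_support_decompose 𝒜 x]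
      refine Ideal.sum_mem _ fun j _ => ?_
      exact hle' (le_sup_right (α := Ideal A) (Ideal.subset_span ⟨j, rfl⟩))
    have hcore := hQ.2 _ _ hIhom hJhom hIJ hJQ
    have ha' : a ∈ (Q.radical.homogeneousCore 𝒜).toIdeal :=
      hcore (Ideal.mem_span_singleton_self a)
    have : a ∈ Q.radical := Ideal.toIdeal_homogeneousCore_le 𝒜 Q.radical ha'
    exact (h𝔮prime.radical_le_iff.mpr hQ𝔮) this
  -- Structure theory of finitely generated abelian groups.
  obtain ⟨n, κ, hκ, pr, hpr, ee, ⟨eqv⟩⟩ := AddCommGroup.equiv_free_prod_directSum_zmod ι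
  set T := ⨁ j : κ, ZMod (pr j ^ ee j) with hT
  haveI : ∀ j, NeZero (pr j ^ ee j) := fun j => ⟨pow_ne_zero _ (hpr j).ne_zero⟩
  haveI : Finite T := Finite.of_equiv _ (DFinsupp.equivFunOnFintype (ι := κ)).symm
  set Λ := Lex (Fin n →₀ ℤ) with hΛ
  set f : ι →+ Λ :=
    { toFun := fun i => toLex (eqv i).1
      map_zero' := by show toLex (eqv 0).1 = 0; rw [map_zero eqv]; rfl
      map_add' := fun a b => by
        show toLex (eqv (a + b)).1 = toLex (eqv a).1 + toLex (eqv b).1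
        rw [map_add eqv]; rfl } with hf
  set π : ι →+ T := (AddMonoidHom.snd (Fin n →₀ ℤ) T).comp eqv.toAddMonoidHom with hπ
  have hinj : ∀ {i j : ι}, f i = f j → π i = π j → i = j := by
    intro i j h1 h2
    apply eqv.injective
    exact Prod.ext (toLex.injective h1) h2
  -- the coarse grading along `f`
  letI grf := coarseGradedRing 𝒜 f
  have hQB : Q.IsHomogeneous (coarseGrading 𝒜 f) := Ideal.IsHomogeneous.coarse 𝒜 f hQhom
  have h𝔭B : 𝔭.IsHomogeneous (coarseGrading 𝒜 f) :=
    isHomogeneous_of_isPrime_colon (coarseGrading 𝒜 f) hQB hp hPx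
  -- all elements of `𝔭` of coarse `π`-degree zero lie in `𝔮`
  have hPC : ∀ z : A, z ∈ 𝔭 → (∀ i, π i ≠ 0 → (DirectSum.decompose 𝒜 z i : A) = 0) → z ∈ 𝔮 := by
    intro z hz hzC
    have compmem : ∀ i0 ∈ (DirectSum.decompose 𝒜 z).support,
        (DirectSum.decompose 𝒜 z i0 : A) ∈ 𝔭 := by
      intro i0 hi0
      have hb := h𝔭B (f i0) hz
      rw [coarse_decompose_eq] at hb
      have hsing : ((DirectSum.decompose 𝒜 z).support.filter fun i => f i = f i0) = {i0} := by
        refine Finset.eq_singleton_iff_unique_mem.mpr ⟨Finset.mem_filter.mpr ⟨hi0, rfl⟩, ?_⟩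
        intro j hj
        obtain ⟨hjsupp, hjf⟩ := Finset.mem_filter.mp hj
        refine hinj hjf ?_
        have hπj : π j = 0 := by
          by_contra hπ
          exact DFinsupp.mem_support_iff.mp hjsupp (Subtype.ext (hzC j hπ))
        have hπ0 : π i0 = 0 := by
          by_contra hπ
          exact DFinsupp.mem_support_iff.mp hi0 (Subtype.ext (hzC i0 hπ))
        rw [hπj, hπ0]
      rw [hsing, Finset.sum_singleton] at hb
      exact hb
    rw [← DirectSum.sum_support_decompose 𝒜 z]
    exact Ideal.sum_mem _ fun i0 hi0 =>
      hom𝔭𝔮 _ ⟨i0, SetLike.coe_mem _⟩ (compmem i0 hi0)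
  -- the coarse grading along `π`, and the subring of `π`-degree-zero elements
  letI decT : DecidableEq T := Classical.decEq T
  letI grπ := coarseGradedRing 𝒜 π
  set C : Subring A :=
    { carrier := (coarseGrading 𝒜 π 0 : Set A)
      zero_mem' := (coarseGrading 𝒜 π 0).zero_mem
      add_mem' := fun ha hb => (coarseGrading 𝒜 π 0).add_mem ha hb
      neg_mem' := fun ha => (coarseGrading 𝒜 π 0).neg_mem ha
      one_mem' := SetLike.one_mem_graded _
      mul_mem' := fun {a b} ha hb => by
        have := SetLike.mul_mem_graded ha hb
        rwa [add_zero] at this } with hC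
  letI : Algebra C A := C.subtype.toAlgebra
  have hint : ∀ z : A, IsIntegral C z := by
    intro z
    have hz : z ∈ integralClosure C A := by
      rw [show z = ∑ τ ∈ (DirectSum.decompose (coarseGrading 𝒜 π) z).support,
          ((DirectSum.decompose (coarseGrading 𝒜 π) z τ : A)) from
          (DirectSum.sum_support_decompose _ z).symm]
      refine Subalgebra.sum_mem _ fun τ _ => ?_
      have hyN : ((DirectSum.decompose (coarseGrading 𝒜 π) z τ : A)) ^ (Nat.card T) ∈
          coarseGrading 𝒜 π ((Nat.card T) • τ) :=
        SetLike.pow_mem_graded _ (SetLike.coe_mem _)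
      rw [card_nsmul_eq_zero'] at hyN
      have hN : Nat.card T ≠ 0 := Nat.card_pos.ne'
      refine ⟨_, Polynomial.monic_X_pow_sub_C (⟨_, hyN⟩ : C) hN, ?_⟩
      simp only [Polynomial.eval₂_sub, Polynomial.eval₂_X_pow, Polynomial.eval₂_C]
      exact sub_self _
    exact hz
  have hcomap : 𝔭.comap (algebraMap C A) ≤ 𝔮.comap (algebraMap C A) := by
    intro cz hcz
    have h1 : (cz : A) ∈ 𝔭 := hcz
    have h2 : (cz : A) ∈ 𝔮 := hPC _ h1 cz.2
    exact h2
  by_contra hne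
  obtain ⟨z, hz𝔭, hz𝔮⟩ := SetLike.not_le_iff_exists.mp hne
  haveI := h𝔮prime
  have hlt := Ideal.comap_lt_comap_of_integral_mem_sdiff (R := C) h𝔮𝔭 ⟨hz𝔭, hz𝔮⟩ (hint z)
  exact absurd (hlt.trans_le hcomap) (lt_irrefl _)
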